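/- Let a ≥ b ≥ 2, n = a+b+1, and let I = i_1⋯i_z be a composition of n with w_I > 0 and i_1 = 1. Then D_I ≥ 0, where D_I = Θ⁺_I(2) − Θ⁻_{\overline{φ(I)}}(a) + Δ_I(b+1). -/

import Mathlib

open scoped Classical
open MvPolynomial Finset

noncomputable section

/-- `σ⁺_I(a)`: the minimal partial sum of `I` that is at least `a`. -/
def sigmaP (I : List ℕ) (a : ℝ) : ℝ :=
  sInf {x : ℝ | ∃ k ≤ I.length, x = ((I.take k).sum : ℝ) ∧ a ≤ x}

/-- `Θ⁺_I(a) = σ⁺_I(a) − a`. -/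
def thetaP (I : List ℕ) (a : ℝ) : ℝ := sigmaP I a - a

/-- `σ⁻_I(a)`: the maximal partial sum of `I` that is at most `a`. -/
def sigmaM (I : List ℕ) (a : ℝ) : ℝ :=
  sSup {x : ℝ | ∃ k ≤ I.length, x = ((I.take k).sum : ℝ) ∧ x ≤ a}

/-- `Θ⁻_I(a) = a − σ⁻_I(a)`. -/
def thetaM (I : List ℕ) (a : ℝ) : ℝ := a - sigmaM I a

/-- `w_I = i₁(i₂−1)⋯(i_z−1)`. -/
def wI : List ℕ → ℕ
  | [] => 1
  | i :: t => i * (t.map (· - 1)).prod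

/-- `e_I`: the product of elementary symmetric polynomials indexed by the parts of `I`,
in `N` variables. -/
def eComp (N : ℕ) (I : List ℕ) : MvPolynomial (Fin N) ℝ :=
  (I.map fun i => MvPolynomial.esymm (Fin N) ℝ i).prod

/-- The chromatic symmetric function of a graph, truncated to `N` variables. -/
def csf {V : Type} [Fintype V] (G : SimpleGraph V) (N : ℕ) : MvPolynomial (Fin N) ℝ :=
  ∑ κ : V → Fin N,
    if ∀ u v, G.Adj u v → κ u ≠ κ v then ∏ v, MvPolynomial.X (κ v) else 0

/-- Add a single edge `uv` to a graph. -/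
def addE {V : Type} (G : SimpleGraph V) (u v : V) : SimpleGraph V :=
  G ⊔ SimpleGraph.fromRel fun x y => x = u ∧ y = v

/-- The list of consecutive pairs of a list of vertices. -/
def chainE (l : List ℕ) : List (ℕ × ℕ) := l.zip l.tail

/-- The simple graph on `Fin n` with the given list of edges. -/
def graphOfEdges (n : ℕ) (E : List (ℕ × ℕ)) : SimpleGraph (Fin n) :=
  SimpleGraph.fromRel fun u v => ((u : ℕ), (v : ℕ)) ∈ E

/-- The path on `n` vertices. -/
def pathG (n : ℕ) : SimpleGraph (Fin n) := graphOfEdges n (chainE (List.range n))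

/-- The cycle on `n` vertices. -/
def cycleG (n : ℕ) : SimpleGraph (Fin n) :=
  graphOfEdges n (chainE (List.range n ++ [0]))

/-- The tadpole `C_a^l`: a cycle on `a` vertices with a path of `l` edges attached. -/
def tadpoleG (a l : ℕ) : SimpleGraph (Fin (a + l)) :=
  graphOfEdges (a + l)
    (chainE (List.range a ++ [0]) ++ chainE (0 :: (List.range l).map (· + a)))

/-- The theta graph `θ_{abc}`: two vertices (`0` and `a+b+c-2`) joined by three internally
disjoint paths of lengths `a`, `b`, `c`. -/
def thetaG (a b c : ℕ) : SimpleGraph (Fin (a + b + c - 1)) :=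
  graphOfEdges (a + b + c - 1)
    (chainE (0 :: ((List.range (a - 1)).map (· + 1) ++ [a + b + c - 2])) ++
     chainE (0 :: ((List.range (b - 1)).map (· + a) ++ [a + b + c - 2])) ++
     chainE (0 :: ((List.range (c - 1)).map (· + (a + b - 1)) ++ [a + b + c - 2])))

/-- The index `p` defined by `m = i₁ + ⋯ + i_{p-1} + s` with `1 ≤ s ≤ i_p`:
the least `k` with `i₁ + ⋯ + i_k ≥ m`. -/
def pIdx (I : List ℕ) (m : ℕ) : ℕ := sInf {k | m ≤ (I.take k).sum}

/-- The number `s` defined by `m = i₁ + ⋯ + i_{p-1} + s` with `1 ≤ s ≤ i_p`. -/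
def sVal (I : List ℕ) (m : ℕ) : ℕ := m - (I.take (pIdx I m - 1)).sum

/-- The index `q` defined by `m = i₂ + ⋯ + i_q + t` with `1 ≤ t ≤ i_{q+1}`
(convention `i_{z+1} = i₁`). -/
def qIdx (I : List ℕ) (m : ℕ) : ℕ := sInf {k | m ≤ ((I.tail ++ I.take 1).take k).sum}

/-- The number `t` defined by `m = i₂ + ⋯ + i_q + t` with `1 ≤ t ≤ i_{q+1}`. -/
def tVal (I : List ℕ) (m : ℕ) : ℕ := m - ((I.tail ++ I.take 1).take (qIdx I m - 1)).sum

/-- The part `i_p`. -/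
def ipPart (I : List ℕ) (m : ℕ) : ℕ := I.getD (pIdx I m - 1) 0

/-- The second elementary symmetric polynomial evaluated on a list. -/
def e2 : List ℕ → ℤ
  | [] => 0
  | x :: t => (x : ℤ) * t.sum + e2 t

/-- The cycle-chord coefficient `Δ_I(m)`. -/
def DeltaI (I : List ℕ) (m : ℕ) : ℤ :=
  if (I.headI : ℤ) ≤ (ipPart I m : ℤ) - sVal I m then
    (sVal I m : ℤ) * ((ipPart I m : ℤ) - sVal I m - I.headI)
  else
    e2 ((ipPart I m - sVal I m) ::
        ((I.drop (pIdx I m)).take (qIdx I m - pIdx I m) ++ [tVal I m]))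

/-- The length of the prefix `P` in the decomposition `I = PQ`, where `Q` is the shortest
suffix of `I` with `|Q| ≥ a`. -/
def kPhi (a : ℕ) (I : List ℕ) : ℕ := sSup {j | j ≤ I.length ∧ a ≤ (I.drop j).sum}

/-- The transformation `φ`: writing `I = PQ` with `Q` the shortest suffix of modulus `≥ a`,
`φ(I) = I` if `Q = I`, and otherwise `φ(I) = i₁ · reverse(P∖i₁) · Q`. -/
def phi (a : ℕ) (I : List ℕ) : List ℕ :=
  if kPhi a I = 0 then I
  else I.take 1 ++ ((I.drop 1).take (kPhi a I - 1)).reverse ++ I.drop (kPhi a I)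

/-- The starting position of the longest suffix `R_I` of `I` of modulus `≤ a`. -/
def rIdx (a : ℕ) (I : List ℕ) : ℕ := sInf {j | (I.drop j).sum ≤ a}

/-- The partial reversal `ψ(I) = reverse(L_I) R_I`, where `R_I` is the longest suffix of `I`
of modulus `≤ a` and `L_I` is the complementary prefix. -/
def psi (a : ℕ) (I : List ℕ) : List ℕ :=
  (I.take (rIdx a I)).reverse ++ I.drop (rIdx a I)

/-- The clock coefficient `D_I = Θ⁺_I(2) − Θ⁻_{reverse(φ(I))}(a) + Δ_I(b+1)`. -/
def DI (a b : ℕ) (I : List ℕ) : ℝ :=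
  thetaP I 2 - thetaM (phi a I).reverse a + (DeltaI I (b + 1) : ℝ)

end


lemma e2_nonneg (L : List ℕ) : 0 ≤ e2 L := by
  induction L with
  | nil => simp [e2]
  | cons x t ih =>
    show 0 ≤ (x : ℤ) * (t.sum : ℤ) + e2 t
    have h1 : (0:ℤ) ≤ (x : ℤ) * (t.sum : ℤ) := by positivity
    linarith

lemma DeltaI_nonneg (L : List ℕ) (m : ℕ) : 0 ≤ DeltaI L m := by
  unfold DeltaI
  split
  · rename_i h
    exact mul_nonneg (by positivity) (by linarith)
  · exact e2_nonneg _

lemma sum_take_mono (L : List ℕ) {j j' : ℕ} (h : j ≤ j') :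
    (L.take j).sum ≤ (L.take j').sum := by
  have h2 := List.sum_take_add_sum_drop (L.take j') j
  rw [List.take_take, min_eq_left h] at h2
  omega

lemma sum_take_succ' (L : List ℕ) (j : ℕ) (hj : j < L.length) :
    (L.take (j+1)).sum = (L.take j).sum + L.getD j 0 := by
  rw [List.take_succ, List.sum_append, List.getD_eq_getElem L 0 hj,
    List.getElem?_eq_getElem hj]
  simp

lemma sum_take_reverse' (L : List ℕ) (k : ℕ) :
    (L.reverse.take k).sum + (L.take (L.length - k)).sum = L.sum := by
  rw [List.take_reverse, List.sum_reverse, Nat.add_comm]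
  exact List.sum_take_add_sum_drop L (L.length - k)

lemma keyDI (a b n : ℕ) (h2 : 2 ≤ b) (hba : b ≤ a) (hn : n = a + b + 1)
    (i₂ : ℕ) (t : List ℕ) (hi2 : 2 ≤ i₂) (hsumL : (1 :: i₂ :: t).sum = n) :
    0 ≤ DI a b (1 :: i₂ :: t) := by
  set L : List ℕ := 1 :: i₂ :: t with hL
  have hsumL' : 1 + (i₂ + t.sum) = n := by simpa [hL] using hsumL
  have hzlen : L.length = t.length + 2 := by simp [hL]
  -- kPhi facts
  have hbdd : BddAbove {j | j ≤ L.length ∧ a ≤ (L.drop j).sum} :=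
    ⟨L.length, fun j hj => hj.1⟩
  have h1mem : 1 ∈ {j | j ≤ L.length ∧ a ≤ (L.drop j).sum} := by
    refine ⟨by omega, ?_⟩
    have hd1 : (L.drop 1).sum = i₂ + t.sum := by simp [hL]
    omega
  have hkmem : kPhi a L ∈ {j | j ≤ L.length ∧ a ≤ (L.drop j).sum} :=
    Nat.sSup_mem ⟨1, h1mem⟩ hbdd
  set k := kPhi a L with hkdef
  have hk1 : 1 ≤ k := le_csSup hbdd h1mem
  have hkle : k ≤ L.length := hkmem.1
  have hka : a ≤ (L.drop k).sum := hkmem.2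
  have hklt : k < L.length := by
    rcases eq_or_lt_of_le hkle with h | h
    · exfalso; rw [h, List.drop_length] at hka; simp at hka; omega
    · exact h
  have hmax : (L.drop (k+1)).sum < a := by
    by_contra h
    push_neg at h
    have hle : k + 1 ≤ k := le_csSup hbdd ⟨by omega, h⟩
    omega
  have hSplit : (L.take k).sum + (L.drop k).sum = n := by
    rw [List.sum_take_add_sum_drop]; exact hsumL
  have hSplit1 : (L.take (k+1)).sum + (L.drop (k+1)).sum = n := by
    rw [List.sum_take_add_sum_drop]; exact hsumL
  have hSk_le : (L.take k).sum ≤ b + 1 := by omega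
  have hc : (L.take (k+1)).sum = (L.take k).sum + L.getD k 0 := sum_take_succ' L k hklt
  have hSk1_ge : b + 2 ≤ (L.take (k+1)).sum := by omega
  -- phi
  have hphi : phi a L = (L.take 1 ++ ((L.drop 1).take (k - 1)).reverse) ++ L.drop k := by
    unfold phi
    rw [← hkdef, if_neg (by omega)]
  have hXlen : (L.take 1 ++ ((L.drop 1).take (k - 1)).reverse).length = k := by
    simp [hL, List.length_take]
    omega
  have hXsum : (L.take 1 ++ ((L.drop 1).take (k - 1)).reverse).sum = (L.take k).sum := by
    rw [List.sum_append, List.sum_reverse]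
    conv_rhs => rw [show k = 1 + (k - 1) by omega, List.take_add, List.sum_append]
  have hJtake : ∀ j, ((phi a L).take (k + j)).sum
      = (L.take k).sum + ((L.drop k).take j).sum := by
    intro j
    rw [hphi, show k + j = (L.take 1 ++ ((L.drop 1).take (k-1)).reverse).length + j by
      rw [hXlen], List.take_length_add_append, List.sum_append, hXsum]
  have hJtake0 : ((phi a L).take k).sum = (L.take k).sum := by
    simpa using hJtake 0
  have hJtake1 : ((phi a L).take (k+1)).sum = (L.take (k+1)).sum := by
    have h := hJtake 1
    rw [List.drop_eq_getElem_cons hklt] at h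
    simp only [List.take_succ_cons, List.take_zero, List.sum_cons, List.sum_nil,
      Nat.add_zero] at h
    rw [hc, List.getD_eq_getElem L 0 hklt]
    exact h
  have hJlen : (phi a L).length = L.length := by
    rw [hphi, List.length_append, hXlen, List.length_drop]; omega
  have hJsum : (phi a L).sum = n := by
    rw [hphi, List.sum_append, hXsum]; exact hSplit
  -- thetaP
  have htake2 : (L.take 2).sum = 1 + i₂ := by simp [hL]
  have hsigP : sigmaP L 2 = ((1 + i₂ : ℕ) : ℝ) := by
    apply IsLeast.csInf_eq
    constructor
    · refine ⟨2, by omega, by rw [htake2], ?_⟩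
      have h22 : (2:ℕ) ≤ 1 + i₂ := by omega
      exact_mod_cast h22
    · rintro x ⟨j, hj, rfl, hx⟩
      rcases le_or_gt j 1 with hj1 | hj1
      · exfalso
        have h1' : (L.take j).sum ≤ 1 := by
          have := sum_take_mono L hj1
          have ht1 : (L.take 1).sum = 1 := by simp [hL]
          omega
        have h2' : ((L.take j).sum : ℝ) ≤ 1 := by exact_mod_cast h1'
        linarith
      · have hmono : (L.take 2).sum ≤ (L.take j).sum := sum_take_mono L hj1
        rw [htake2] at hmono
        exact_mod_cast hmono
  have hi2' : (2:ℝ) ≤ (i₂:ℝ) := by exact_mod_cast hi2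
  rcases eq_or_lt_of_le hSk_le with hA | hB
  · -- Case A : (L.take k).sum = b + 1
    have hsigM : sigmaM (phi a L).reverse a = (a : ℝ) := by
      apply IsGreatest.csSup_eq
      constructor
      · refine ⟨L.length - k, ?_, ?_, le_refl _⟩
        · rw [List.length_reverse, hJlen]; omega
        · have h := sum_take_reverse' (phi a L) (L.length - k)
          rw [hJlen, hJsum, show L.length - (L.length - k) = k by omega, hJtake0, hA] at h
          have hv : ((phi a L).reverse.take (L.length - k)).sum = a := by omega
          rw [hv]
      · rintro x ⟨k', hk', rfl, hx⟩
        exact hx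
    have hD : (0:ℝ) ≤ ((DeltaI L (b+1) : ℤ) : ℝ) := by
      exact_mod_cast DeltaI_nonneg L (b+1)
    unfold DI thetaP thetaM
    rw [hsigP, hsigM]
    push_cast
    linarith
  · -- Case B : (L.take k).sum < b + 1
    have hSk1_le_n : (L.take (k+1)).sum ≤ n := by omega
    have hsigM : sigmaM (phi a L).reverse a = ((n - (L.take (k+1)).sum : ℕ) : ℝ) := by
      apply IsGreatest.csSup_eq
      constructor
      · refine ⟨L.length - (k+1), ?_, ?_, ?_⟩
        · rw [List.length_reverse, hJlen]; omega
        · have h := sum_take_reverse' (phi a L) (L.length - (k+1))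
          rw [hJlen, hJsum, show L.length - (L.length - (k+1)) = k+1 by omega, hJtake1] at h
          have hv : ((phi a L).reverse.take (L.length - (k+1))).sum
              = n - (L.take (k+1)).sum := by omega
          rw [hv]
        · have hle : n - (L.take (k+1)).sum ≤ a := by omega
          exact_mod_cast hle
      · rintro x ⟨k', hk', rfl, hx⟩
        rw [List.length_reverse, hJlen] at hk'
        have h := sum_take_reverse' (phi a L) k'
        rw [hJlen, hJsum] at h
        have hx' : ((phi a L).reverse.take k').sum ≤ a := by exact_mod_cast hx
        rcases le_or_gt (L.length - k') k with hj | hj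
        · exfalso
          have hmono := sum_take_mono (phi a L) hj
          rw [hJtake0] at hmono
          omega
        · have h1' : ((phi a L).take (k+1)).sum ≤ ((phi a L).take (L.length - k')).sum :=
            sum_take_mono _ hj
          rw [hJtake1] at h1'
          have hv : ((phi a L).reverse.take k').sum ≤ n - (L.take (k+1)).sum := by omega
          exact_mod_cast hv
    -- DeltaI
    have hpmem : (k+1) ∈ {j | b + 1 ≤ (L.take j).sum} := by
      simp only [Set.mem_setOf_eq]; omega
    have hpIdx : pIdx L (b+1) = k + 1 := by
      have hmem := Nat.sInf_mem (⟨k+1, hpmem⟩ :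
        Set.Nonempty {j | b + 1 ≤ (L.take j).sum})
      simp only [Set.mem_setOf_eq] at hmem
      have hle : sInf {j | b + 1 ≤ (L.take j).sum} ≤ k + 1 := Nat.sInf_le hpmem
      have hgt : ¬ (sInf {j | b + 1 ≤ (L.take j).sum} ≤ k) := by
        intro hcon
        have hmono := sum_take_mono L hcon
        omega
      show sInf {j | b + 1 ≤ (L.take j).sum} = k + 1
      omega
    have hsVal : sVal L (b+1) = b + 1 - (L.take k).sum := by
      unfold sVal
      rw [hpIdx, Nat.add_sub_cancel]
    have hip : ipPart L (b+1) = L.getD k 0 := by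
      unfold ipPart
      rw [hpIdx, Nat.add_sub_cancel]
    set s := b + 1 - (L.take k).sum with hs
    set c := L.getD k 0 with hcdef
    have hs1 : 1 ≤ s := by omega
    have hcs : s + 1 ≤ c := by omega
    have hhead : L.headI = 1 := rfl
    have hDelta : DeltaI L (b+1) = (s:ℤ) * ((c:ℤ) - (s:ℤ) - 1) := by
      unfold DeltaI
      rw [hsVal, hip, hhead, if_pos (by omega)]
      push_cast
      ring
    unfold DI thetaP thetaM
    rw [hsigP, hsigM, hDelta]
    have e1 : ((n - (L.take (k+1)).sum : ℕ) : ℝ)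
        = (n:ℝ) - ((L.take (k+1)).sum : ℝ) := by
      have := hSk1_le_n
      push_cast [Nat.cast_sub this]
      ring
    rw [e1]
    have e2' : ((L.take (k+1)).sum : ℝ) = ((L.take k).sum : ℝ) + (c:ℝ) := by
      exact_mod_cast hc
    have e3 : (s:ℝ) + ((L.take k).sum : ℝ) = (b:ℝ) + 1 := by
      have hh : s + (L.take k).sum = b + 1 := by omega
      exact_mod_cast hh
    have hD2 : (((s:ℤ) * ((c:ℤ) - (s:ℤ) - 1) : ℤ) : ℝ)
        = (s:ℝ) * ((c:ℝ) - (s:ℝ) - 1) := by push_cast; ring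
    have h12 : ((1 + i₂ : ℕ) : ℝ) = 1 + (i₂ : ℝ) := by push_cast; ring
    rw [hD2, h12]
    have hs1' : (1:ℝ) ≤ (s:ℝ) := by exact_mod_cast hs1
    have hcs' : (s:ℝ) + 1 ≤ (c:ℝ) := by exact_mod_cast hcs
    have hn' : (n:ℝ) = (a:ℝ) + (b:ℝ) + 1 := by exact_mod_cast hn
    nlinarith [mul_nonneg (sub_nonneg.mpr hs1')
      (by linarith : (0:ℝ) ≤ (c:ℝ) - (s:ℝ) - 1)]

/-- If `w_I > 0` and `i₁ = 1`, then `D_I ≥ 0`. -/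
theorem stmt10 (a b n : ℕ) (h2 : 2 ≤ b) (hba : b ≤ a) (hn : n = a + b + 1)
    (I : Composition n) (hw : 0 < wI I.blocks) (h1 : I.blocks.headI = 1) :
    0 ≤ DI a b I.blocks := by
  have hsum := I.blocks_sum
  rcases hblocks : I.blocks with _ | ⟨b0, t0⟩
  · rw [hblocks] at hsum; simp at hsum; omega
  · rw [hblocks] at hsum h1 hw
    simp only [List.headI] at h1
    subst h1
    rcases t0 with _ | ⟨b1, t1⟩
    · simp at hsum; omega
    · have hb1 : 2 ≤ b1 := by
        by_contra hcon
        push_neg at hcon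
        have hz : b1 - 1 = 0 := by omega
        simp [wI, hz] at hw
      exact keyDI a b n h2 hba hn b1 t1 hb1 hsum
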